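/- The polynomial S = T_1^3 + ⋯ + T_5^3 − (T_1+⋯+T_5)^3 is irreducible in ℂ[T_1,…,T_5]. -/

import Mathlib

/-- A quadratic `C (u*s) * X^2 + C b * X + C c` with `u` a unit, `s` prime,
`s ∣ b`, `s ∤ c` is irreducible. -/
theorem segre_quad_irred {R : Type*} [CommRing R] [IsDomain R] {u s b c : R}
    (hu : IsUnit u) (hs : Prime s) (hb : s ∣ b) (hc : ¬ s ∣ c) :
    Irreducible (Polynomial.C (u * s) * Polynomial.X ^ 2 +
      Polynomial.C b * Polynomial.X + Polynomial.C c) := by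
  set f : Polynomial R := Polynomial.C (u * s) * Polynomial.X ^ 2 +
      Polynomial.C b * Polynomial.X + Polynomial.C c with hf
  have hus : u * s ≠ 0 := mul_ne_zero hu.ne_zero hs.ne_zero
  have hdeg : f.natDegree = 2 := Polynomial.natDegree_quadratic hus
  have hc2 : f.coeff 2 = u * s := by
    simp only [hf, Polynomial.coeff_add, Polynomial.coeff_C_mul, Polynomial.coeff_X_pow,
      Polynomial.coeff_X, Polynomial.coeff_C]
    norm_num
  have hc1 : f.coeff 1 = b := by
    simp only [hf, Polynomial.coeff_add, Polynomial.coeff_C_mul, Polynomial.coeff_X_pow,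
      Polynomial.coeff_X, Polynomial.coeff_C]
    norm_num
  have hc0 : f.coeff 0 = c := by
    simp only [hf, Polynomial.coeff_add, Polynomial.coeff_C_mul, Polynomial.coeff_X_pow,
      Polynomial.coeff_X, Polynomial.coeff_C]
    norm_num
  have hf0 : f ≠ 0 := fun h => hus (by simpa [h] using hc2.symm)
  -- helper for the constant-factor case
  have key0 : ∀ g h : Polynomial R, f = g * h → g.natDegree = 0 → IsUnit g := by
    intro g h hgh hg0
    have hgC := Polynomial.eq_C_of_natDegree_eq_zero hg0
    set g0 := g.coeff 0
    have hdvd : Polynomial.C g0 ∣ f := hgC ▸ hgh ▸ Dvd.intro h (hgC ▸ rfl)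
    rw [Polynomial.C_dvd_iff_dvd_coeff] at hdvd
    have h2 := hdvd 2; rw [hc2] at h2
    have h0 := hdvd 0; rw [hc0] at h0
    -- g0 ∣ s
    have hgs : g0 ∣ s := by
      obtain ⟨v, hv⟩ := hu.exists_left_inv
      exact Dvd.dvd.mul_left h2 v |>.trans (by rw [← mul_assoc, hv, one_mul])
    obtain ⟨t, ht⟩ := hgs
    rcases hs.irreducible.isUnit_or_isUnit ht with hgu | htu
    · exact hgC ▸ Polynomial.isUnit_C.mpr hgu
    · exfalso
      apply hc
      obtain ⟨w, hw⟩ := htu.exists_left_inv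
      have : s ∣ g0 := ⟨w, by rw [ht]; linear_combination (-g0) * hw⟩
      exact this.trans h0
  -- helper for the linear-times-linear case
  have key1 : ∀ g h : Polynomial R, f = g * h → g.natDegree = 1 → h.natDegree = 1 →
      s ∣ g.coeff 1 → False := by
    intro g h hgh hg1 hh1 hsg
    have hgne0 : g ≠ 0 := fun h0 => by rw [h0] at hg1; simp at hg1
    have hhne0 : h ≠ 0 := fun h0 => by rw [h0] at hh1; simp at hh1
    have hgl : g.coeff 1 ≠ 0 := by
      have := Polynomial.leadingCoeff_ne_zero.mpr hgne0
      rwa [Polynomial.leadingCoeff, hg1] at this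
    have hhl : h.coeff 1 ≠ 0 := by
      have := Polynomial.leadingCoeff_ne_zero.mpr hhne0
      rwa [Polynomial.leadingCoeff, hh1] at this
    -- coefficient relations
    have e2 : g.coeff 1 * h.coeff 1 = u * s := by
      have := congrArg Polynomial.leadingCoeff hgh
      rw [Polynomial.leadingCoeff_mul, Polynomial.leadingCoeff, Polynomial.leadingCoeff,
        Polynomial.leadingCoeff, hdeg, hg1, hh1, hc2] at this
      exact this.symm
    have e1 : g.coeff 0 * h.coeff 1 + g.coeff 1 * h.coeff 0 = b := by
      have := congrArg (fun p => Polynomial.coeff p 1) hgh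
      simp only [Polynomial.coeff_mul] at this
      rw [Finset.Nat.sum_antidiagonal_eq_sum_range_succ_mk] at this
      simp [Finset.sum_range_succ] at this
      rw [hc1] at this
      linear_combination -this
    have e0 : g.coeff 0 * h.coeff 0 = c := by
      have := congrArg (fun p => Polynomial.coeff p 0) hgh
      simp only [Polynomial.mul_coeff_zero, hc0] at this
      exact this.symm
    -- s does not divide h.coeff 1
    have hsh : ¬ s ∣ h.coeff 1 := by
      intro hsh'
      obtain ⟨a, ha⟩ := hsg
      obtain ⟨d, hd⟩ := hsh'
      rw [ha, hd] at e2
      have key : s * u = s * (s * (a * d)) := by linear_combination -e2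
      have hu2 : u = s * (a * d) := mul_left_cancel₀ hs.ne_zero key
      exact hs.not_unit (isUnit_of_dvd_unit ⟨a * d, hu2⟩ hu)
    -- s ∣ g.coeff 0
    have hsg0 : s ∣ g.coeff 0 := by
      have hdvd : s ∣ g.coeff 0 * h.coeff 1 := by
        have : g.coeff 0 * h.coeff 1 = b - g.coeff 1 * h.coeff 0 := by linear_combination e1
        rw [this]
        exact dvd_sub hb (hsg.mul_right _)
      rcases hs.dvd_mul.mp hdvd with h' | h'
      · exact h'
      · exact absurd h' hsh
    exact hc (e0 ▸ hsg0.mul_right _)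
  constructor
  · intro hunit
    have := Polynomial.natDegree_eq_zero_of_isUnit hunit
    omega
  · intro g h hgh
    by_contra hcon
    push_neg at hcon
    obtain ⟨hg, hh⟩ := hcon
    have hgne : g ≠ 0 := fun h0 => hf0 (by rw [hgh, h0, zero_mul])
    have hhne : h ≠ 0 := fun h0 => hf0 (by rw [hgh, h0, mul_zero])
    have hsum : g.natDegree + h.natDegree = 2 := by
      rw [← Polynomial.natDegree_mul hgne hhne, ← hgh, hdeg]
    have htri : g.natDegree = 0 ∨ (g.natDegree = 1 ∧ h.natDegree = 1) ∨ h.natDegree = 0 := by omega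
    rcases htri with hdg | ⟨hdg, hdh⟩ | hdh
    · exact hg (key0 g h hgh hdg)
    · have hlead : g.coeff 1 * h.coeff 1 = u * s := by
        have := congrArg Polynomial.leadingCoeff hgh
        rw [Polynomial.leadingCoeff_mul, Polynomial.leadingCoeff, Polynomial.leadingCoeff,
          Polynomial.leadingCoeff, hdeg, hdg, hdh, hc2] at this
        exact this.symm
      have : s ∣ g.coeff 1 * h.coeff 1 := by rw [hlead]; exact ⟨u, mul_comm u s⟩
      rcases hs.dvd_mul.mp this with h' | h'
      · exact key1 g h hgh hdg hdh h'
      · exact key1 h g (by rw [hgh, mul_comm]) hdh hdg h'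
    · exact hh (key0 h g (by rw [hgh, mul_comm]) hdh)

open MvPolynomial in
noncomputable abbrev segreS4 : MvPolynomial (Fin 4) ℂ := ∑ i : Fin 4, X i

open MvPolynomial in
/-- automorphism sending `X 0` to `X 0 + X 1 + X 2 + X 3` -/
noncomputable def segreAut : MvPolynomial (Fin 4) ℂ ≃ₐ[ℂ] MvPolynomial (Fin 4) ℂ :=
  AlgEquiv.ofAlgHom
    (aeval fun i => if i = 0 then X 0 + X 1 + X 2 + X 3 else X i)
    (aeval fun i => if i = 0 then X 0 - X 1 - X 2 - X 3 else X i)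
    (by ext i : 1; fin_cases i <;> (simp; try ring))
    (by ext i : 1; fin_cases i <;> (simp; try ring))

open MvPolynomial in
theorem segre_prime_X0 : Prime (X 0 : MvPolynomial (Fin 4) ℂ) := by
  rw [← MulEquiv.prime_iff (finSuccEquiv ℂ 3).toMulEquiv]
  have : (finSuccEquiv ℂ 3).toMulEquiv (X 0) = Polynomial.X := by
    simp [AlgEquiv.toMulEquiv, finSuccEquiv_X_zero]
  rw [this]
  exact Polynomial.prime_X

open MvPolynomial in
theorem segre_prime_S4 : Prime segreS4 := by
  have h : segreAut (X 0) = segreS4 := by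
    simp [segreAut, AlgEquiv.ofAlgHom, segreS4, Fin.sum_univ_four]
  have := (MulEquiv.prime_iff segreAut.toMulEquiv).mpr segre_prime_X0
  rw [show segreAut.toMulEquiv (X 0) = segreAut (X 0) from rfl, h] at this
  exact this

open MvPolynomial in
theorem segre_not_dvd :
    ¬ segreS4 ∣ ((∑ i : Fin 4, X i ^ 3) - segreS4 ^ 3 : MvPolynomial (Fin 4) ℂ) := by
  rintro ⟨q, hq⟩
  have := congrArg (eval (![1, 1, -2, 0] : Fin 4 → ℂ)) hq
  simp [segreS4, Fin.sum_univ_four] at this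
  norm_num at this

theorem segre_isUnit_neg3 : IsUnit (-3 : MvPolynomial (Fin 4) ℂ) := by
  refine isUnit_iff_exists_inv.mpr ⟨MvPolynomial.C (-3⁻¹ : ℂ), ?_⟩
  rw [show (-3 : MvPolynomial (Fin 4) ℂ) = MvPolynomial.C (-3 : ℂ) by rw [map_neg, map_ofNat], ← map_mul]
  norm_num

open MvPolynomial in
/-- the Segre cubic polynomial `S = T₁³+⋯+T₅³ − (T₁+⋯+T₅)³` is
irreducible in `ℂ[T₁,…,T₅]`. -/
theorem segre_cubic_irreducible :
    Irreducible ((∑ i : Fin 5, X i ^ 3) - (∑ i : Fin 5, X i) ^ 3 :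
      MvPolynomial (Fin 5) ℂ) := by
  rw [← MulEquiv.irreducible_iff (finSuccEquiv ℂ 4).toMulEquiv]
  have hmap : (finSuccEquiv ℂ 4).toMulEquiv
      ((∑ i : Fin 5, X i ^ 3) - (∑ i : Fin 5, X i) ^ 3 : MvPolynomial (Fin 5) ℂ)
      = Polynomial.C ((-3) * segreS4) * Polynomial.X ^ 2 +
        Polynomial.C (-3 * segreS4 ^ 2) * Polynomial.X +
        Polynomial.C ((∑ i : Fin 4, X i ^ 3) - segreS4 ^ 3) := by
    show (finSuccEquiv ℂ 4) _ = _
    rw [Fin.sum_univ_succ (f := fun i : Fin 5 => (X i : MvPolynomial (Fin 5) ℂ)),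
      Fin.sum_univ_succ (f := fun i : Fin 5 => (X i : MvPolynomial (Fin 5) ℂ) ^ 3)]
    simp only [map_sub, map_add, map_pow, map_sum, map_mul, map_neg, map_ofNat,
      finSuccEquiv_X_zero, finSuccEquiv_X_succ, segreS4]
    ring
  rw [hmap]
  exact segre_quad_irred segre_isUnit_neg3 segre_prime_S4
    ⟨-3 * segreS4, by ring⟩ segre_not_dvd
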